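/- If r ≡ 0 (mod 4) and r ≠ 4, or r ≡ 3 (mod 4), and r is such that the corresponding resolvable covering design on g(r) points exists (where g(r) = 3r when r ≡ 0 (mod 4) and g(r) = 3r−1 when r ≡ 3 (mod 4)), then there exists an r-edge-colouring of the complete graph K_{g(r)} in which every monochromatic connected component has at most 4 vertices, and hence which contains no monochromatic copy of P_5; consequently R_r(P_5) ≥ g(r) + 1 for all r ≠ 4 in these residue classes. -/

import Mathlib

/-- `G` contains the path on `t` vertices as a subgraph. -/
def ContainsPath (t : ℕ) {V : Type*} (G : SimpleGraph V) : Prop :=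
  ∃ f : Fin t → V, Function.Injective f ∧
    ∀ i j : Fin t, (i : ℕ) + 1 = (j : ℕ) → G.Adj (f i) (f j)

/-- The graph on `Fin n` formed by the edges of colour `c`. -/
def colorClass {n r : ℕ} (C : Sym2 (Fin n) → Fin r) (c : Fin r) : SimpleGraph (Fin n) :=
  SimpleGraph.fromEdgeSet {e | C e = c}

/-- The colouring `C` contains a monochromatic path on `t` vertices. -/
def HasMonoPath (t : ℕ) {n r : ℕ} (C : Sym2 (Fin n) → Fin r) : Prop :=
  ∃ c : Fin r, ContainsPath t (colorClass C c)

/-- The `r`-coloured Ramsey number of the path on `t` vertices. -/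
noncomputable def pathRamsey (r t : ℕ) : ℕ :=
  sInf {n | ∀ C : Sym2 (Fin n) → Fin r, HasMonoPath t C}

/-- The Turán number of the path on `t` vertices. -/
noncomputable def exPath (t n : ℕ) : ℕ :=
  sSup {m | ∃ G : SimpleGraph (Fin n), ¬ ContainsPath t G ∧ G.edgeSet.ncard = m}

open Finset

lemma path5_of_min_degree {V : Type*} [DecidableEq V] (G : SimpleGraph V) [DecidableRel G.Adj]
    (T : Finset V) (hT : T.Nonempty)
    (hdeg : ∀ x ∈ T, 4 ≤ (T.filter (G.Adj x)).card) :
    ContainsPath 5 G := by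
  obtain ⟨x0, hx0⟩ := hT
  have h1 : (T.filter (G.Adj x0)).Nonempty := by
    rw [← Finset.card_pos]; have := hdeg x0 hx0; omega
  obtain ⟨x1, hx1⟩ := h1
  obtain ⟨hx1T, a01⟩ := Finset.mem_filter.mp hx1
  have h2 : ((T.filter (G.Adj x1)) \ {x0}).Nonempty := by
    rw [← Finset.card_pos]
    have h := Finset.card_le_card_sdiff_add_card (s := T.filter (G.Adj x1)) (t := {x0})
    have := hdeg x1 hx1T
    simp only [Finset.card_singleton] at h
    omega
  obtain ⟨x2, hx2⟩ := h2
  obtain ⟨hx2f, hx2n⟩ := Finset.mem_sdiff.mp hx2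
  obtain ⟨hx2T, a12⟩ := Finset.mem_filter.mp hx2f
  have h3 : ((T.filter (G.Adj x2)) \ {x0, x1}).Nonempty := by
    rw [← Finset.card_pos]
    have h := Finset.card_le_card_sdiff_add_card (s := T.filter (G.Adj x2)) (t := {x0, x1})
    have := hdeg x2 hx2T
    have hc : ({x0, x1} : Finset V).card ≤ 2 := Finset.card_insert_le _ _ |>.trans (by simp)
    omega
  obtain ⟨x3, hx3⟩ := h3
  obtain ⟨hx3f, hx3n⟩ := Finset.mem_sdiff.mp hx3
  obtain ⟨hx3T, a23⟩ := Finset.mem_filter.mp hx3f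
  have h4 : ((T.filter (G.Adj x3)) \ {x0, x1, x2}).Nonempty := by
    rw [← Finset.card_pos]
    have h := Finset.card_le_card_sdiff_add_card (s := T.filter (G.Adj x3)) (t := {x0, x1, x2})
    have := hdeg x3 hx3T
    have hc : ({x0, x1, x2} : Finset V).card ≤ 3 :=
      (Finset.card_insert_le _ _).trans (by
        have := Finset.card_insert_le x1 ({x2} : Finset V); simp at this ⊢; omega)
    omega
  obtain ⟨x4, hx4⟩ := h4
  obtain ⟨hx4f, hx4n⟩ := Finset.mem_sdiff.mp hx4
  obtain ⟨hx4T, a34⟩ := Finset.mem_filter.mp hx4f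
  simp only [Finset.mem_insert, Finset.mem_singleton, not_or] at hx2n hx3n hx4n
  have n01 := G.ne_of_adj a01
  have n12 := G.ne_of_adj a12
  have n23 := G.ne_of_adj a23
  have n34 := G.ne_of_adj a34
  refine ⟨![x0, x1, x2, x3, x4], ?_, ?_⟩
  · intro i j hij
    fin_cases i <;> fin_cases j <;> simp_all <;> tauto
  · intro i j hij
    fin_cases i <;> fin_cases j <;> simp_all

lemma exists_good_subset {V : Type*} [DecidableEq V] (G : SimpleGraph V) [DecidableRel G.Adj] :
    ∀ S : Finset V, 6 * S.card < ∑ x ∈ S, (S.filter (G.Adj x)).card →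
    ∃ T, T ⊆ S ∧ T.Nonempty ∧ ∀ x ∈ T, 4 ≤ (T.filter (G.Adj x)).card := by
  intro S
  induction S using Finset.strongInduction with
  | _ S ih =>
    intro hsum
    by_cases hall : ∀ x ∈ S, 4 ≤ (S.filter (G.Adj x)).card
    · refine ⟨S, Finset.Subset.refl S, ?_, hall⟩
      rcases S.eq_empty_or_nonempty with rfl | h
      · simp at hsum
      · exact h
    · push_neg at hall
      obtain ⟨x, hxS, hxd⟩ := hall
      set S' := S.erase x with hS'
      have hssub : S' ⊂ S := Finset.erase_ssubset hxS
      have hcard : S'.card = S.card - 1 := Finset.card_erase_of_mem hxS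
      have hScard : 1 ≤ S.card := Finset.card_pos.mpr ⟨x, hxS⟩
      -- degree comparison
      have hdle : ∀ y ∈ S', (S.filter (G.Adj y)).card ≤
          (S'.filter (G.Adj y)).card + (if G.Adj x y then 1 else 0) := by
        intro y hy
        have : S'.filter (G.Adj y) = (S.filter (G.Adj y)).erase x := by
          rw [hS', Finset.filter_erase]
        rw [this]
        by_cases hadj : G.Adj x y
        · have hxm : x ∈ S.filter (G.Adj y) := Finset.mem_filter.mpr ⟨hxS, hadj.symm⟩
          rw [Finset.card_erase_of_mem hxm]
          simp [hadj]
          omega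
        · have hxm : x ∉ S.filter (G.Adj y) := by
            simp only [Finset.mem_filter, not_and]
            intro _ h; exact hadj h.symm
          rw [Finset.erase_eq_of_notMem hxm]
          simp
      have hsum1 : ∑ y ∈ S', (S.filter (G.Adj y)).card ≤
          (∑ y ∈ S', (S'.filter (G.Adj y)).card) + (S.filter (G.Adj x)).card := by
        calc ∑ y ∈ S', (S.filter (G.Adj y)).card
            ≤ ∑ y ∈ S', ((S'.filter (G.Adj y)).card + (if G.Adj x y then 1 else 0)) :=
              Finset.sum_le_sum hdle
          _ = (∑ y ∈ S', (S'.filter (G.Adj y)).card) + ∑ y ∈ S', (if G.Adj x y then 1 else 0) := by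
              rw [Finset.sum_add_distrib]
          _ ≤ (∑ y ∈ S', (S'.filter (G.Adj y)).card) + (S.filter (G.Adj x)).card := by
              gcongr
              rw [Finset.sum_boole]
              push_cast
              exact_mod_cast Finset.card_le_card (by
                intro y hy
                simp only [Finset.mem_filter] at hy ⊢
                exact ⟨Finset.mem_of_mem_erase hy.1, hy.2⟩)
      have hsplit : ∑ y ∈ S, (S.filter (G.Adj y)).card =
          (∑ y ∈ S', (S.filter (G.Adj y)).card) + (S.filter (G.Adj x)).card := by
        rw [hS', Finset.sum_erase_add S _ hxS]
      have hnew : 6 * S'.card < ∑ y ∈ S', (S'.filter (G.Adj y)).card := by omega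
      obtain ⟨T, hT1, hT2, hT3⟩ := ih S' hssub hnew
      exact ⟨T, hT1.trans (Finset.erase_subset _ _), hT2, hT3⟩

lemma ramsey_P5 (r n : ℕ) (hr : 0 < r) (hn : n = 6 * r + 2) (C : Sym2 (Fin n) → Fin r) :
    HasMonoPath 5 C := by
  classical
  -- for each x, colour degrees sum to n - 1
  have hrow : ∀ x : Fin n,
      ∑ c : Fin r, ((univ : Finset (Fin n)).filter ((colorClass C c).Adj x)).card = n - 1 := by
    intro x
    have hfib : ((univ : Finset (Fin n)).erase x).card =
        ∑ c : Fin r, (((univ : Finset (Fin n)).erase x).filter (fun y => C s(x, y) = c)).card := by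
      exact Finset.card_eq_sum_card_fiberwise (fun y _ => Finset.mem_univ _)
    have heq : ∀ c : Fin r, (univ : Finset (Fin n)).filter ((colorClass C c).Adj x) =
        ((univ : Finset (Fin n)).erase x).filter (fun y => C s(x, y) = c) := by
      intro c
      ext y
      rw [Finset.mem_filter]
      simp only [Finset.mem_filter, Finset.mem_erase, Finset.mem_univ, true_and, and_true,
        colorClass, SimpleGraph.fromEdgeSet_adj, Set.mem_setOf_eq]
      constructor
      · rintro ⟨hc, hne⟩; exact ⟨fun h => hne h.symm, hc⟩
      · rintro ⟨hne, hc⟩; exact ⟨hc, fun h => hne h.symm⟩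
    rw [Finset.card_erase_of_mem (Finset.mem_univ x), Finset.card_univ, Fintype.card_fin] at hfib
    rw [← hfib.symm]
    exact Finset.sum_congr rfl (fun c _ => by rw [heq c])
  -- total sum
  have htot : ∑ x : Fin n, ∑ c : Fin r,
      ((univ : Finset (Fin n)).filter ((colorClass C c).Adj x)).card = n * (n - 1) := by
    rw [Finset.sum_congr rfl (fun x _ => hrow x)]
    simp [Finset.card_univ, mul_comm]
  rw [Finset.sum_comm] at htot
  -- some colour has big sum
  have hbig : ∃ c : Fin r, 6 * n <
      ∑ x : Fin n, ((univ : Finset (Fin n)).filter ((colorClass C c).Adj x)).card := by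
    by_contra hcon
    push_neg at hcon
    have hle : ∑ c : Fin r, ∑ x : Fin n,
        ((univ : Finset (Fin n)).filter ((colorClass C c).Adj x)).card ≤ r * (6 * n) := by
      calc _ ≤ ∑ _c : Fin r, 6 * n := Finset.sum_le_sum (fun c _ => hcon c)
        _ = r * (6 * n) := by simp [Finset.card_univ, mul_comm]
    rw [htot] at hle
    have h1 : n - 1 = 6 * r + 1 := by omega
    rw [h1] at hle
    nlinarith [show (0:ℕ) < n by omega]
  obtain ⟨c, hc⟩ := hbig
  have hcards : ((univ : Finset (Fin n)).card) = n := by simp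
  obtain ⟨T, _, hTne, hTdeg⟩ := exists_good_subset (colorClass C c) univ (by rw [hcards]; exact hc)
  exact ⟨c, path5_of_min_degree (colorClass C c) T hTne hTdeg⟩

/-- Let `g(r) = 3r` if `r ≡ 0 (mod 4)` (`r ≠ 4`) and `g(r) = 3r - 1` if `r ≡ 3 (mod 4)`.
If a resolvable `(2,4,g(r))`-covering design with `r` parallel classes exists, then there
is an `r`-edge-colouring of `K_{g(r)}` whose monochromatic components all have at most 4
vertices, hence with no monochromatic `P₅`; consequently `R_r(P₅) ≥ g(r) + 1`. -/
theorem pathRamsey_P5_lower_from_covering (r : ℕ)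
    (hres : (r % 4 = 0 ∧ r ≠ 4) ∨ r % 4 = 3)
    (g : ℕ) (hg : g = if r % 4 = 0 then 3 * r else 3 * r - 1)
    (hdesign : ∃ B : Finset (Finset (Fin g)),
      (∀ b ∈ B, b.card = 4) ∧
      (∀ x y : Fin g, x ≠ y → ∃ b ∈ B, x ∈ b ∧ y ∈ b) ∧
      ∃ f : Finset (Fin g) → Fin r,
        ∀ (i : Fin r) (x : Fin g), (B.filter (fun b => f b = i ∧ x ∈ b)).card = 1) :
    (∃ C : Sym2 (Fin g) → Fin r,
      (∀ (c : Fin r) (x : Fin g),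
        {y | (colorClass C c).Reachable x y}.ncard ≤ 4) ∧
      ¬ HasMonoPath 5 C) ∧
    g + 1 ≤ pathRamsey r 5 := by
  classical
  obtain ⟨B, hBcard, hcover, f, hpart⟩ := hdesign
  have hr : 0 < r := by
    rcases Nat.eq_zero_or_pos r with h0 | h
    · subst h0; exact (f ∅).elim0
    · exact h
  -- the unique block of colour c containing x
  have hblk : ∀ (c : Fin r) (x : Fin g), ∃ b, b ∈ B ∧ f b = c ∧ x ∈ b ∧
      ∀ b', b' ∈ B → f b' = c → x ∈ b' → b' = b := by
    intro c x
    obtain ⟨b, hb⟩ := Finset.card_eq_one.mp (hpart c x)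
    have hbm : b ∈ B.filter (fun b => f b = c ∧ x ∈ b) := hb ▸ Finset.mem_singleton_self b
    rw [Finset.mem_filter] at hbm
    refine ⟨b, hbm.1, hbm.2.1, hbm.2.2, fun b' h1 h2 h3 => ?_⟩
    have : b' ∈ B.filter (fun b => f b = c ∧ x ∈ b) := Finset.mem_filter.mpr ⟨h1, h2, h3⟩
    rw [hb, Finset.mem_singleton] at this; exact this
  choose blk hblkB hblkf hblkmem hblkuniq using hblk
  -- the colouring
  set C : Sym2 (Fin g) → Fin r := fun e =>
    f (if h : ∃ b ∈ B, ∀ v ∈ e, v ∈ b then h.choose else ∅) with hC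
  -- adjacent vertices lie in a common block of the matching colour
  have hadjblock : ∀ (c : Fin r) (x y : Fin g), (colorClass C c).Adj x y →
      ∃ b, b ∈ B ∧ f b = c ∧ x ∈ b ∧ y ∈ b := by
    intro c x y hadj
    rw [colorClass, SimpleGraph.fromEdgeSet_adj, Set.mem_setOf_eq] at hadj
    obtain ⟨hCe, hne⟩ := hadj
    have hex : ∃ b ∈ B, ∀ v ∈ s(x, y), v ∈ b := by
      obtain ⟨b, hbB, hxb, hyb⟩ := hcover x y hne
      exact ⟨b, hbB, fun v hv => by
        rcases Sym2.mem_iff.mp hv with h | h <;> subst h <;> assumption⟩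
    rw [hC] at hCe
    simp only [dif_pos hex] at hCe
    obtain ⟨hbB, hball⟩ := hex.choose_spec
    exact ⟨hex.choose, hbB, hCe, hball x (Sym2.mem_mk_left x y), hball y (Sym2.mem_mk_right x y)⟩
  -- reachable vertices lie in the block of the start
  have hreach : ∀ (c : Fin r) (x y : Fin g), (colorClass C c).Reachable x y → y ∈ blk c x := by
    intro c x y hR
    obtain ⟨w⟩ := hR
    induction w with
    | nil => exact hblkmem c _
    | cons hadj p ih =>
      rename_i u v z
      obtain ⟨b, hbB, hfb, hub, hvb⟩ := hadjblock c u v hadj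
      have e1 : b = blk c u := hblkuniq c u b hbB hfb hub
      have e2 : b = blk c v := hblkuniq c v b hbB hfb hvb
      rw [← e1, e2]; exact ih
  have hcomp : ∀ (c : Fin r) (x : Fin g),
      {y | (colorClass C c).Reachable x y}.ncard ≤ 4 := by
    intro c x
    have hsub : {y | (colorClass C c).Reachable x y} ⊆ ↑(blk c x) := fun y hy => hreach c x y hy
    calc {y | (colorClass C c).Reachable x y}.ncard ≤ (↑(blk c x) : Set (Fin g)).ncard :=
          Set.ncard_le_ncard hsub (blk c x).finite_toSet
      _ = (blk c x).card := Set.ncard_coe_finset _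
      _ = 4 := hBcard _ (hblkB c x)
  have hnomono : ¬ HasMonoPath 5 C := by
    rintro ⟨c, p, hinj, hadjp⟩
    have r01 : (colorClass C c).Reachable (p 0) (p 1) := (hadjp 0 1 (by decide)).reachable
    have r12 : (colorClass C c).Reachable (p 1) (p 2) := (hadjp 1 2 (by decide)).reachable
    have r23 : (colorClass C c).Reachable (p 2) (p 3) := (hadjp 2 3 (by decide)).reachable
    have r34 : (colorClass C c).Reachable (p 3) (p 4) := (hadjp 3 4 (by decide)).reachable
    have m0 : p 0 ∈ blk c (p 0) := hblkmem c _
    have m1 : p 1 ∈ blk c (p 0) := hreach c _ _ r01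
    have m2 : p 2 ∈ blk c (p 0) := hreach c _ _ (r01.trans r12)
    have m3 : p 3 ∈ blk c (p 0) := hreach c _ _ ((r01.trans r12).trans r23)
    have m4 : p 4 ∈ blk c (p 0) := hreach c _ _ (((r01.trans r12).trans r23).trans r34)
    have hsub : (univ : Finset (Fin 5)).image p ⊆ blk c (p 0) := by
      intro z hz
      obtain ⟨i, _, rfl⟩ := Finset.mem_image.mp hz
      fin_cases i <;> assumption
    have h5 : ((univ : Finset (Fin 5)).image p).card = 5 := by
      rw [Finset.card_image_of_injective _ hinj, Finset.card_univ, Fintype.card_fin]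
    have := Finset.card_le_card hsub
    rw [h5, hBcard _ (hblkB c (p 0))] at this
    omega
  refine ⟨⟨C, hcomp, hnomono⟩, ?_⟩
  -- the Ramsey bound
  refine le_csInf ⟨6 * r + 2, fun C' => ramsey_P5 r _ hr rfl C'⟩ ?_
  intro n hn
  by_contra hlt
  push_neg at hlt
  have hle : n ≤ g := by omega
  set C' : Sym2 (Fin n) → Fin r := fun e => C (e.map (Fin.castLE hle)) with hC'
  obtain ⟨c, p, hinj, hadjp⟩ := hn C'
  refine hnomono ⟨c, Fin.castLE hle ∘ p, (Fin.castLE_injective hle).comp hinj, ?_⟩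
  intro i j hij
  have h := hadjp i j hij
  rw [colorClass, SimpleGraph.fromEdgeSet_adj, Set.mem_setOf_eq] at h ⊢
  obtain ⟨hc, hne⟩ := h
  simp only [hC', Sym2.map_pair_eq] at hc
  exact ⟨hc, fun hh => hne (Fin.castLE_injective hle hh)⟩
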